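/- Let X, Y, Z be pairwise disjoint finite sets with |X| = |Y| = |Z| = n, let # be a symbol not in X ∪ Y ∪ Z, and let T ⊆ X × Y × Z. Define the 4-sides Letter Boxed puzzle with alphabet Σ = X ∪ Y ∪ Z ∪ {#}, dictionary D = {# x y z # : (x, y, z) ∈ T} (each word having length 5), Γ₁ the multiset of n copies of #, Γ₂ = X, Γ₃ = Y, and Γ₄ = Z (each element with multiplicity 1). Then the puzzle admits a solution of length at most n if and only if there exists S ⊆ T with |S| = n such that every element of X ∪ Y ∪ Z appears in exactly one triple of S. -/

import Mathlib

/-!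
Letter Boxed with `S` sides: alphabet a type `A`, dictionary `D : Finset (List A)`
(of nonempty words), sides `Γ : Fin S → Multiset A`.

A solution is a list of words `ws` (each in `D`, consecutive words linked
last-letter-to-first-letter) together with a side assignment `sides : ℕ → Fin S`
for the positions of the concatenation `σ = ws.flatten`, such that consecutive positions
lie on different sides (except across word boundaries, where the side is repeated),
every position lies on its assigned side, and every character of every side is covered
the required number of times.
-/

/-- Position `j` (0-based) of the concatenation of `ws` is the last character of one
of the words of `ws`. -/
def WordEnd {A : Type} (ws : List (List A)) (j : ℕ) : Prop :=
  ∃ t < ws.length, j + 1 = ((ws.take (t + 1)).map List.length).sum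

/-- `(ws, sides)` is a solution of the Letter Boxed puzzle with dictionary `D` and
sides `Γ`.  The four conditions are the linking condition between consecutive words,
the alternation condition on sides, the membership condition, and the covering
condition. -/
def IsLBSolution {S : ℕ} {A : Type} [DecidableEq A]
    (D : Finset (List A)) (Γ : Fin S → Multiset A)
    (ws : List (List A)) (sides : ℕ → Fin S) : Prop :=
  (∀ w ∈ ws, w ∈ D) ∧
  (∀ i : ℕ, i + 1 < ws.length → (ws.getD i []).getLast? = (ws.getD (i + 1) []).head?) ∧
  (∀ j : ℕ, j + 1 < ws.flatten.length →
    ((WordEnd ws j → sides j = sides (j + 1)) ∧ (¬ WordEnd ws j → sides j ≠ sides (j + 1)))) ∧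
  (∀ (j : ℕ) (h : j < ws.flatten.length), ws.flatten.get ⟨j, h⟩ ∈ Γ (sides j)) ∧
  (∀ (i : Fin S) (γ : A),
    (Γ i).count γ ≤
      {j : ℕ | ∃ h : j < ws.flatten.length, ws.flatten.get ⟨j, h⟩ = γ ∧ sides j = i ∧
        (j + 1 = ws.flatten.length ∨ ¬ WordEnd ws j)}.ncard)

set_option linter.unusedSectionVars false

variable {A : Type} [DecidableEq A]

lemma sum_map_length_const (ws : List (List A)) (h : ∀ w ∈ ws, w.length = 5) :
    (ws.map List.length).sum = 5 * ws.length := by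
  induction ws with
  | nil => simp
  | cons w tl ih =>
    simp only [List.map_cons, List.sum_cons, List.length_cons, h w (by simp)]
    rw [ih (fun w hw => h w (by simp [hw]))]; ring

lemma flatten_length_const (ws : List (List A)) (h : ∀ w ∈ ws, w.length = 5) :
    ws.flatten.length = 5 * ws.length := by
  rw [List.length_flatten]; exact sum_map_length_const ws h

lemma flatten_getD_const (ws : List (List A)) (h : ∀ w ∈ ws, w.length = 5) (j : ℕ) (d : A) :
    ws.flatten.getD j d = (ws.getD (j / 5) []).getD (j % 5) d := by
  induction ws generalizing j with
  | nil => simp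
  | cons w tl ih =>
    have hw : w.length = 5 := h w (by simp)
    rw [List.flatten_cons]
    by_cases hj : j < 5
    · have h0 : j / 5 = 0 := by omega
      have h1 : j % 5 = j := by omega
      rw [h0, h1, List.getD_cons_zero]
      rw [List.getD_append _ _ _ _ (by omega)]
    · have h0 : j / 5 = (j - 5) / 5 + 1 := by omega
      have h1 : j % 5 = (j - 5) % 5 := by omega
      rw [h0, h1, List.getD_cons_succ]
      rw [← ih (fun w hw => h w (by simp [hw])) (j - 5)]
      rw [List.getD_append_right _ _ _ _ (by omega), hw]

lemma wordEnd_iff (ws : List (List A)) (h : ∀ w ∈ ws, w.length = 5) (j : ℕ) :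
    WordEnd ws j ↔ j % 5 = 4 ∧ j < 5 * ws.length := by
  constructor
  · rintro ⟨t, ht, hj⟩
    have : ((ws.take (t + 1)).map List.length).sum = 5 * (t + 1) := by
      rw [sum_map_length_const _ (fun w hw => h w (List.mem_of_mem_take hw)),
        List.length_take]
      omega
    rw [this] at hj
    omega
  · rintro ⟨h4, hlt⟩
    refine ⟨j / 5, by omega, ?_⟩
    rw [sum_map_length_const _ (fun w hw => h w (List.mem_of_mem_take hw)),
      List.length_take]
    omega

lemma key_lemma (f : ℕ → A) (k : ℕ) (W : Finset A) (hk : k ≤ W.card)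
    (hcov : ∀ a ∈ W, ∃ q < k, f q = a) :
    k = W.card ∧ (∀ q < k, ∀ q' < k, f q = f q' → q = q') := by
  have hsub : W ⊆ (Finset.range k).image f := by
    intro a ha
    obtain ⟨q, hq, hfq⟩ := hcov a ha
    exact Finset.mem_image.2 ⟨q, Finset.mem_range.2 hq, hfq⟩
  have h1 : W.card ≤ ((Finset.range k).image f).card := Finset.card_le_card hsub
  have h2 : ((Finset.range k).image f).card ≤ k := by
    calc _ ≤ (Finset.range k).card := Finset.card_image_le
    _ = k := Finset.card_range k
  have hcards : ((Finset.range k).image f).card = (Finset.range k).card := by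
    rw [Finset.card_range]; omega
  have hinj := Finset.injOn_of_card_image_eq hcards
  exact ⟨by omega, fun q hq q' hq' hf =>
    hinj (by simp [hq]) (by simp [hq']) hf⟩



/-- The reduction from 3D MATCHING: with `X, Y, Z` pairwise disjoint of size `n`,
`#` a symbol outside `X ∪ Y ∪ Z`, and `T ⊆ X × Y × Z`, the 4-sides puzzle with
dictionary `{# x y z # : (x,y,z) ∈ T}`, `Γ₁` consisting of `n` copies of `#`,
`Γ₂ = X`, `Γ₃ = Y`, `Γ₄ = Z` admits a solution of length at most `n` iff `T` contains a
perfect three-dimensional matching. -/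
theorem letterBoxed_iff_3dmatching {A : Type} [DecidableEq A] {n : ℕ}
    (X Y Z : Finset A) (hash : A)
    (hXY : Disjoint X Y) (hXZ : Disjoint X Z) (hYZ : Disjoint Y Z)
    (hhash : hash ∉ X ∪ Y ∪ Z)
    (hX : X.card = n) (hY : Y.card = n) (hZ : Z.card = n)
    (T : Finset (A × A × A)) (hT : ∀ t ∈ T, t.1 ∈ X ∧ t.2.1 ∈ Y ∧ t.2.2 ∈ Z) :
    (∃ (ws : List (List A)) (sides : ℕ → Fin 4),
        ws.length ≤ n ∧
        IsLBSolution (T.image fun t => [hash, t.1, t.2.1, t.2.2, hash])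
          ![Multiset.replicate n hash, X.val, Y.val, Z.val] ws sides) ↔
    (∃ S : Finset (A × A × A), S ⊆ T ∧ S.card = n ∧
        ∀ a ∈ X ∪ Y ∪ Z, ∃! t, t ∈ S ∧ (t.1 = a ∨ t.2.1 = a ∨ t.2.2 = a)) := by
  constructor
  · rintro ⟨ws, sides, hlen, hD, -, -, -, hcov⟩
    have hwords : ∀ w ∈ ws, ∃ t ∈ T, w = [hash, t.1, t.2.1, t.2.2, hash] := by
      intro w hw
      obtain ⟨t, ht, hw'⟩ := Finset.mem_image.1 (hD w hw)
      exact ⟨t, ht, hw'.symm⟩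
    have hlen5 : ∀ w ∈ ws, w.length = 5 := by
      intro w hw; obtain ⟨t, -, rfl⟩ := hwords w hw; rfl
    have hL : ws.flatten.length = 5 * ws.length := flatten_length_const ws hlen5
    set k := ws.length with hk
    have hword_q : ∀ q < k, ∃ t ∈ T, ws.getD q [] = [hash, t.1, t.2.1, t.2.2, hash] := by
      intro q hq
      rw [List.getD_eq_getElem ws [] hq]
      exact hwords _ (List.getElem_mem hq)
    have hget : ∀ (j : ℕ) (h : j < ws.flatten.length),
        ws.flatten.get ⟨j, h⟩ = (ws.getD (j / 5) []).getD (j % 5) hash := by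
      intro j h
      rw [← flatten_getD_const ws hlen5 j hash, List.getD_eq_getElem _ _ h]
      rfl
    -- coverage for X (position 1)
    have hcovX : ∀ a ∈ X, ∃ q < k, (ws.getD q []).getD 1 hash = a := by
      intro a ha
      have hc := hcov 1 a
      have : Multiset.count a (![Multiset.replicate n hash, X.val, Y.val, Z.val] 1) = 1 := by
        simp only [Matrix.cons_val_one, Matrix.head_cons]
        exact Multiset.count_eq_one_of_mem X.nodup ha
      rw [this] at hc
      obtain ⟨j, hj⟩ := Set.nonempty_of_ncard_ne_zero (Nat.one_le_iff_ne_zero.mp hc)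
      obtain ⟨hjL, hja, -, -⟩ := hj
      rw [hget j hjL] at hja
      have hqk : j / 5 < k := by omega
      obtain ⟨t, htT, hwq⟩ := hword_q (j / 5) hqk
      rw [hwq] at hja
      obtain ⟨h1, h2, h3⟩ := hT t htT
      have h5 : j % 5 = 0 ∨ j % 5 = 1 ∨ j % 5 = 2 ∨ j % 5 = 3 ∨ j % 5 = 4 := by omega
      rcases h5 with h|h|h|h|h <;> rw [h] at hja <;> simp at hja
      · exact absurd (hja ▸ ha) (fun hc => hhash (Finset.mem_union_left _ (Finset.mem_union_left _ hc)))
      · exact ⟨j / 5, hqk, by rw [hwq]; simpa using hja⟩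
      · exact absurd ha (Finset.disjoint_right.1 hXY (hja ▸ h2))
      · exact absurd ha (Finset.disjoint_right.1 hXZ (hja ▸ h3))
      · exact absurd (hja ▸ ha) (fun hc => hhash (Finset.mem_union_left _ (Finset.mem_union_left _ hc)))
    have hcovY : ∀ a ∈ Y, ∃ q < k, (ws.getD q []).getD 2 hash = a := by
      intro a ha
      have hc := hcov 2 a
      have : Multiset.count a (![Multiset.replicate n hash, X.val, Y.val, Z.val] 2) = 1 := by
        simp only [show (![Multiset.replicate n hash, X.val, Y.val, Z.val] 2) = Y.val from rfl]
        exact Multiset.count_eq_one_of_mem Y.nodup ha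
      rw [this] at hc
      obtain ⟨j, hj⟩ := Set.nonempty_of_ncard_ne_zero (Nat.one_le_iff_ne_zero.mp hc)
      obtain ⟨hjL, hja, -, -⟩ := hj
      rw [hget j hjL] at hja
      have hqk : j / 5 < k := by omega
      obtain ⟨t, htT, hwq⟩ := hword_q (j / 5) hqk
      rw [hwq] at hja
      obtain ⟨h1, h2, h3⟩ := hT t htT
      have h5 : j % 5 = 0 ∨ j % 5 = 1 ∨ j % 5 = 2 ∨ j % 5 = 3 ∨ j % 5 = 4 := by omega
      rcases h5 with h|h|h|h|h <;> rw [h] at hja <;> simp at hja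
      · exact absurd (hja ▸ ha) (fun hc => hhash (Finset.mem_union_left _ (Finset.mem_union_right _ hc)))
      · exact absurd ha (Finset.disjoint_left.1 hXY (hja ▸ h1))
      · exact ⟨j / 5, hqk, by rw [hwq]; simpa using hja⟩
      · exact absurd ha (Finset.disjoint_right.1 hYZ (hja ▸ h3))
      · exact absurd (hja ▸ ha) (fun hc => hhash (Finset.mem_union_left _ (Finset.mem_union_right _ hc)))
    have hcovZ : ∀ a ∈ Z, ∃ q < k, (ws.getD q []).getD 3 hash = a := by
      intro a ha
      have hc := hcov 3 a
      have : Multiset.count a (![Multiset.replicate n hash, X.val, Y.val, Z.val] 3) = 1 := by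
        simp only [show (![Multiset.replicate n hash, X.val, Y.val, Z.val] 3) = Z.val from rfl]
        exact Multiset.count_eq_one_of_mem Z.nodup ha
      rw [this] at hc
      obtain ⟨j, hj⟩ := Set.nonempty_of_ncard_ne_zero (Nat.one_le_iff_ne_zero.mp hc)
      obtain ⟨hjL, hja, -, -⟩ := hj
      rw [hget j hjL] at hja
      have hqk : j / 5 < k := by omega
      obtain ⟨t, htT, hwq⟩ := hword_q (j / 5) hqk
      rw [hwq] at hja
      obtain ⟨h1, h2, h3⟩ := hT t htT
      have h5 : j % 5 = 0 ∨ j % 5 = 1 ∨ j % 5 = 2 ∨ j % 5 = 3 ∨ j % 5 = 4 := by omega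
      rcases h5 with h|h|h|h|h <;> rw [h] at hja <;> simp at hja
      · exact absurd (hja ▸ ha) (fun hc => hhash (Finset.mem_union_right _ hc))
      · exact absurd ha (Finset.disjoint_left.1 hXZ (hja ▸ h1))
      · exact absurd ha (Finset.disjoint_left.1 hYZ (hja ▸ h2))
      · exact ⟨j / 5, hqk, by rw [hwq]; simpa using hja⟩
      · exact absurd (hja ▸ ha) (fun hc => hhash (Finset.mem_union_right _ hc))
    obtain ⟨hkn1, hinj1⟩ := key_lemma (fun q => (ws.getD q []).getD 1 hash) k X (by omega) hcovX
    obtain ⟨-, hinj2⟩ := key_lemma (fun q => (ws.getD q []).getD 2 hash) k Y (by omega) hcovY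
    obtain ⟨-, hinj3⟩ := key_lemma (fun q => (ws.getD q []).getD 3 hash) k Z (by omega) hcovZ
    have hkn : k = n := by omega
    set g : List A → A × A × A := fun w => (w.getD 1 hash, w.getD 2 hash, w.getD 3 hash)
      with hg
    have hmemS : ∀ q < k, g (ws.getD q []) ∈ (ws.map g).toFinset := by
      intro q hq
      rw [List.mem_toFinset, List.mem_map]
      exact ⟨ws.getD q [], by rw [List.getD_eq_getElem ws [] hq]; exact List.getElem_mem hq, rfl⟩
    have hSmem : ∀ t' ∈ (ws.map g).toFinset, ∃ q < k, t' = g (ws.getD q []) := by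
      intro t' ht'
      rw [List.mem_toFinset, List.mem_map] at ht'
      obtain ⟨w, hw, rfl⟩ := ht'
      obtain ⟨q, hq, hwq⟩ := List.mem_iff_getElem.1 hw
      exact ⟨q, hq, by rw [List.getD_eq_getElem ws [] hq, hwq]⟩
    have hST : (ws.map g).toFinset ⊆ T := by
      intro t' ht'
      rw [List.mem_toFinset, List.mem_map] at ht'
      obtain ⟨w, hw, rfl⟩ := ht'
      obtain ⟨t, htT, rfl⟩ := hwords w hw
      exact htT
    refine ⟨(ws.map g).toFinset, hST, ?_, ?_⟩
    · have hc1 : (ws.map g).toFinset.card ≤ n := by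
        calc (ws.map g).toFinset.card ≤ (ws.map g).length := List.toFinset_card_le _
        _ = k := by simp [hk]
        _ = n := hkn
      have hc2 : X ⊆ ((ws.map g).toFinset.image Prod.fst) := by
        intro a ha
        obtain ⟨q, hq, hfa⟩ := hcovX a ha
        exact Finset.mem_image.2 ⟨g (ws.getD q []), hmemS q hq, hfa⟩
      have := Finset.card_le_card hc2
      have := Finset.card_image_le (s := (ws.map g).toFinset) (f := Prod.fst)
      omega
    · intro a ha
      have hcomp : ∀ t' ∈ (ws.map g).toFinset, t'.1 ∈ X ∧ t'.2.1 ∈ Y ∧ t'.2.2 ∈ Z :=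
        fun t' ht' => hT t' (hST ht')
      rcases Finset.mem_union.1 ha with ha' | haZ
      · rcases Finset.mem_union.1 ha' with haX | haY
        · obtain ⟨q, hq, hfa⟩ := hcovX a haX
          refine ⟨g (ws.getD q []), ⟨hmemS q hq, Or.inl hfa⟩, ?_⟩
          rintro t' ⟨ht'S, hdisj⟩
          obtain ⟨q', hq', rfl⟩ := hSmem t' ht'S
          obtain ⟨hx', hy', hz'⟩ := hcomp _ ht'S
          have h1 : (ws.getD q' []).getD 1 hash = a := by
            rcases hdisj with h|h|h
            · exact h
            · exact absurd haX (Finset.disjoint_right.1 hXY (h ▸ hy'))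
            · exact absurd haX (Finset.disjoint_right.1 hXZ (h ▸ hz'))
          have := hinj1 q' hq' q hq (by rw [h1, hfa])
          rw [this]
        · obtain ⟨q, hq, hfa⟩ := hcovY a haY
          refine ⟨g (ws.getD q []), ⟨hmemS q hq, Or.inr (Or.inl hfa)⟩, ?_⟩
          rintro t' ⟨ht'S, hdisj⟩
          obtain ⟨q', hq', rfl⟩ := hSmem t' ht'S
          obtain ⟨hx', hy', hz'⟩ := hcomp _ ht'S
          have h1 : (ws.getD q' []).getD 2 hash = a := by
            rcases hdisj with h|h|h
            · exact absurd haY (Finset.disjoint_left.1 hXY (h ▸ hx'))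
            · exact h
            · exact absurd haY (Finset.disjoint_right.1 hYZ (h ▸ hz'))
          have := hinj2 q' hq' q hq (by rw [h1, hfa])
          rw [this]
      · obtain ⟨q, hq, hfa⟩ := hcovZ a haZ
        refine ⟨g (ws.getD q []), ⟨hmemS q hq, Or.inr (Or.inr hfa)⟩, ?_⟩
        rintro t' ⟨ht'S, hdisj⟩
        obtain ⟨q', hq', rfl⟩ := hSmem t' ht'S
        obtain ⟨hx', hy', hz'⟩ := hcomp _ ht'S
        have h1 : (ws.getD q' []).getD 3 hash = a := by
          rcases hdisj with h|h|h
          · exact absurd haZ (Finset.disjoint_left.1 hXZ (h ▸ hx'))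
          · exact absurd haZ (Finset.disjoint_left.1 hYZ (h ▸ hy'))
          · exact h
        have := hinj3 q' hq' q hq (by rw [h1, hfa])
        rw [this]
  · rintro ⟨S, hST, hScard, hSuniq⟩
    set ws : List (List A) := S.toList.map (fun t => [hash, t.1, t.2.1, t.2.2, hash]) with hws
    set sides : ℕ → Fin 4 := fun j =>
      if j % 5 = 1 then 1 else if j % 5 = 2 then 2 else if j % 5 = 3 then 3 else 0 with hsides
    have hkn : ws.length = n := by simp [hws, hScard]
    have hlen5 : ∀ w ∈ ws, w.length = 5 := by
      intro w hw
      obtain ⟨t, -, rfl⟩ := List.mem_map.1 hw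
      rfl
    have hL : ws.flatten.length = 5 * n := by rw [flatten_length_const ws hlen5, hkn]
    have hword_q : ∀ q < ws.length, ∃ t ∈ S, ws.getD q [] = [hash, t.1, t.2.1, t.2.2, hash] := by
      intro q hq
      rw [List.getD_eq_getElem ws [] hq]
      obtain ⟨t, htS, heq⟩ := List.mem_map.1 (List.getElem_mem hq)
      exact ⟨t, (Finset.mem_toList).1 htS, heq.symm⟩
    have hexist : ∀ t ∈ S, ∃ q < ws.length, ws.getD q [] = [hash, t.1, t.2.1, t.2.2, hash] := by
      intro t ht
      obtain ⟨q, hq, hq'⟩ := List.mem_iff_getElem.1 ((Finset.mem_toList).2 ht)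
      have hq2 : q < ws.length := by simpa [hws] using hq
      refine ⟨q, hq2, ?_⟩
      rw [List.getD_eq_getElem ws [] hq2]
      simp only [hws, List.getElem_map, hq']
    have hget : ∀ (j : ℕ) (h : j < ws.flatten.length),
        ws.flatten.get ⟨j, h⟩ = (ws.getD (j / 5) []).getD (j % 5) hash := by
      intro j h
      rw [← flatten_getD_const ws hlen5 j hash, List.getD_eq_getElem _ _ h]
      rfl
    have hWE : ∀ j, WordEnd ws j ↔ j % 5 = 4 ∧ j < 5 * n := by
      intro j; rw [wordEnd_iff ws hlen5, hkn]
    refine ⟨ws, sides, le_of_eq hkn, ?_, ?_, ?_, ?_, ?_⟩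
    · intro w hw
      obtain ⟨t, htS, rfl⟩ := List.mem_map.1 hw
      exact Finset.mem_image.2 ⟨t, hST ((Finset.mem_toList).1 htS), rfl⟩
    · intro i hi
      obtain ⟨t, -, ht⟩ := hword_q i (by omega)
      obtain ⟨t', -, ht'⟩ := hword_q (i + 1) hi
      rw [ht, ht']
      rfl
    · intro j hj
      rw [hL] at hj
      constructor
      · intro hwe
        obtain ⟨h4, -⟩ := (hWE j).1 hwe
        have h0 : (j + 1) % 5 = 0 := by omega
        simp [hsides, h4, h0]
      · intro hwe
        have h4 : j % 5 ≠ 4 := fun h => hwe ((hWE j).2 ⟨h, by omega⟩)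
        have h5 : j % 5 = 0 ∨ j % 5 = 1 ∨ j % 5 = 2 ∨ j % 5 = 3 := by omega
        rcases h5 with h|h|h|h <;>
          · have h1 : (j + 1) % 5 = j % 5 + 1 := by omega
            simp [hsides, h, h1]
    · intro j h
      rw [hget j h]
      have hj5 : j < 5 * n := by rw [← hL]; exact h
      have hq : j / 5 < ws.length := by omega
      obtain ⟨t, htS, hwq⟩ := hword_q (j / 5) hq
      obtain ⟨h1, h2, h3⟩ := hT t (hST htS)
      rw [hwq]
      have h5 : j % 5 = 0 ∨ j % 5 = 1 ∨ j % 5 = 2 ∨ j % 5 = 3 ∨ j % 5 = 4 := by omega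
      rcases h5 with hm|hm|hm|hm|hm <;> rw [hm] <;> simp only [hsides, hm] <;> norm_num
      · exact Multiset.mem_replicate.2 ⟨by omega, rfl⟩
      · exact h1
      · exact h2
      · exact h3
      · exact Multiset.mem_replicate.2 ⟨by omega, rfl⟩
    · have hforceX : ∀ a ∈ X, ∃ t ∈ S, t.1 = a := by
        intro a ha
        obtain ⟨t, ⟨htS, hd⟩, -⟩ := hSuniq a (Finset.mem_union_left _ (Finset.mem_union_left _ ha))
        obtain ⟨h1, h2, h3⟩ := hT t (hST htS)
        refine ⟨t, htS, ?_⟩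
        rcases hd with h|h|h
        · exact h
        · exact absurd ha (Finset.disjoint_right.1 hXY (h ▸ h2))
        · exact absurd ha (Finset.disjoint_right.1 hXZ (h ▸ h3))
      have hforceY : ∀ a ∈ Y, ∃ t ∈ S, t.2.1 = a := by
        intro a ha
        obtain ⟨t, ⟨htS, hd⟩, -⟩ := hSuniq a (Finset.mem_union_left _ (Finset.mem_union_right _ ha))
        obtain ⟨h1, h2, h3⟩ := hT t (hST htS)
        refine ⟨t, htS, ?_⟩
        rcases hd with h|h|h
        · exact absurd ha (Finset.disjoint_left.1 hXY (h ▸ h1))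
        · exact h
        · exact absurd ha (Finset.disjoint_right.1 hYZ (h ▸ h3))
      have hforceZ : ∀ a ∈ Z, ∃ t ∈ S, t.2.2 = a := by
        intro a ha
        obtain ⟨t, ⟨htS, hd⟩, -⟩ := hSuniq a (Finset.mem_union_right _ ha)
        obtain ⟨h1, h2, h3⟩ := hT t (hST htS)
        refine ⟨t, htS, ?_⟩
        rcases hd with h|h|h
        · exact absurd ha (Finset.disjoint_left.1 hXZ (h ▸ h1))
        · exact absurd ha (Finset.disjoint_left.1 hYZ (h ▸ h2))
        · exact h
      intro i γ
      have hfin : ∀ (s : Set ℕ), (∀ j ∈ s, j < ws.flatten.length) → s.Finite := by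
        intro s hs
        exact Set.Finite.subset (Set.finite_Iio ws.flatten.length) hs
      have hfin' : ∀ (P : ℕ → Fin 4 → Prop) (i : Fin 4),
          {j : ℕ | ∃ h : j < ws.flatten.length, ws.flatten.get ⟨j, h⟩ = γ ∧ sides j = i ∧
            (j + 1 = ws.flatten.length ∨ ¬ WordEnd ws j)}.Finite := by
        intro P i
        apply hfin
        rintro j ⟨hj, -⟩
        exact hj
      -- the single-letter sides: a uniform argument
      have hsingle : ∀ (i : Fin 4) (W : Finset A) (p : ℕ), p = 1 ∨ p = 2 ∨ p = 3 →
          (∀ a ∈ W, ∃ t ∈ S, [hash, t.1, t.2.1, t.2.2, hash].getD p hash = a) →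
          (∀ j, j % 5 = p → sides j = i) →
          γ ∈ W →
          1 ≤ {j : ℕ | ∃ h : j < ws.flatten.length, ws.flatten.get ⟨j, h⟩ = γ ∧ sides j = i ∧
            (j + 1 = ws.flatten.length ∨ ¬ WordEnd ws j)}.ncard := by
        intro i W p hp hforce hsd hγ
        obtain ⟨t, htS, htγ⟩ := hforce γ hγ
        obtain ⟨q, hq, hwq⟩ := hexist t htS
        have hjL : 5 * q + p < ws.flatten.length := by
          rw [hL]; rw [hkn] at hq; omega
        have hmod : (5 * q + p) % 5 = p := by omega
        have hdiv : (5 * q + p) / 5 = q := by omega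
        have hjmem : (5 * q + p) ∈ {j : ℕ | ∃ h : j < ws.flatten.length,
            ws.flatten.get ⟨j, h⟩ = γ ∧ sides j = i ∧
            (j + 1 = ws.flatten.length ∨ ¬ WordEnd ws j)} := by
          refine ⟨hjL, ?_, hsd _ hmod, Or.inr ?_⟩
          · rw [hget _ hjL, hdiv, hmod, hwq, htγ]
          · rw [hWE]
            rintro ⟨h4, -⟩
            omega
        exact (Set.ncard_pos (hfin' (fun _ _ => True) i)).2 ⟨_, hjmem⟩
      rcases i with ⟨iv, hiv⟩
      interval_cases iv
      · -- hash side
        show Multiset.count γ (Multiset.replicate n hash) ≤ _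
        rcases eq_or_ne γ hash with heq | hne
        · have hsub : (↑((Finset.range n).image (fun q => 5 * q)) : Set ℕ) ⊆
              {j : ℕ | ∃ h : j < ws.flatten.length, ws.flatten.get ⟨j, h⟩ = γ ∧
                sides j = ⟨0, hiv⟩ ∧
                (j + 1 = ws.flatten.length ∨ ¬ WordEnd ws j)} := by
            intro j hj
            simp only [Finset.coe_image, Finset.coe_range, Set.mem_image, Set.mem_Iio] at hj
            obtain ⟨q, hq, rfl⟩ := hj
            have hjL : 5 * q < ws.flatten.length := by omega
            have e1 : 5 * q / 5 = q := by omega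
            have e2 : 5 * q % 5 = 0 := by omega
            refine ⟨hjL, ?_, ?_, Or.inr ?_⟩
            · rw [hget _ hjL, heq]
              obtain ⟨t, -, hwq⟩ := hword_q q (by omega)
              rw [e1, e2, hwq]
              rfl
            · simp [hsides, e2]
            · rw [hWE]
              rintro ⟨h4, -⟩
              omega
          have hcard : (↑((Finset.range n).image (fun q => 5 * q)) : Set ℕ).ncard = n := by
            rw [Set.ncard_coe_finset, Finset.card_image_of_injective _ (fun a b h => by omega),
              Finset.card_range]
          calc Multiset.count γ (Multiset.replicate n hash) ≤ n := by
                rw [heq]; simp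
            _ = _ := hcard.symm
            _ ≤ _ := Set.ncard_le_ncard hsub (hfin' (fun _ _ => True) _)
        · calc Multiset.count γ (Multiset.replicate n hash) = 0 := by
                rw [Multiset.count_replicate, if_neg (fun h => hne h.symm)]
            _ ≤ _ := Nat.zero_le _
      · show Multiset.count γ X.val ≤ _
        by_cases hγ : γ ∈ X
        · rw [Multiset.count_eq_one_of_mem X.nodup hγ]
          refine hsingle ⟨1, hiv⟩ X 1 (Or.inl rfl) (fun a ha => ?_) (fun j hj => ?_) hγ
          · obtain ⟨t, htS, ht⟩ := hforceX a ha
            exact ⟨t, htS, by simpa using ht⟩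
          · simp [hsides, hj]
        · rw [Multiset.count_eq_zero.2 (by simpa using hγ)]
          exact Nat.zero_le _
      · show Multiset.count γ Y.val ≤ _
        by_cases hγ : γ ∈ Y
        · rw [Multiset.count_eq_one_of_mem Y.nodup hγ]
          refine hsingle ⟨2, hiv⟩ Y 2 (Or.inr (Or.inl rfl)) (fun a ha => ?_) (fun j hj => ?_) hγ
          · obtain ⟨t, htS, ht⟩ := hforceY a ha
            exact ⟨t, htS, by simpa using ht⟩
          · simp [hsides, hj]
        · rw [Multiset.count_eq_zero.2 (by simpa using hγ)]
          exact Nat.zero_le _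
      · show Multiset.count γ Z.val ≤ _
        by_cases hγ : γ ∈ Z
        · rw [Multiset.count_eq_one_of_mem Z.nodup hγ]
          refine hsingle ⟨3, hiv⟩ Z 3 (Or.inr (Or.inr rfl)) (fun a ha => ?_) (fun j hj => ?_) hγ
          · obtain ⟨t, htS, ht⟩ := hforceZ a ha
            exact ⟨t, htS, by simpa using ht⟩
          · simp [hsides, hj]
        · rw [Multiset.count_eq_zero.2 (by simpa using hγ)]
          exact Nat.zero_le _
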